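/- The derivation H satisfies H(ω) = 0 in the free algebra F', where ω = Σ_{i=1}^n [q_i, p^i] + Σ_{j=1}^{d'} [Q_j, P^j]. Consequently H maps the two-sided ideal generated by ω into itself and induces a derivation of the quotient algebra K = F'/(ω). -/

import Mathlib

open scoped BigOperators

noncomputable section

/-- Generators `q_1,…,q_n, p^1,…,p^n, Q_1,…,Q_{d'}, P^1,…,P^{d'}`. -/
abbrev KVar (n d' : ℕ) := Fin n ⊕ (Fin n ⊕ (Fin d' ⊕ Fin d'))

/-- The free unital associative ℂ-algebra on the generators. -/
abbrev KFree (n d' : ℕ) := FreeAlgebra ℂ (KVar n d')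

variable {n d' : ℕ}

/-- The generator `q_i`. -/
def kq (i : Fin n) : KFree n d' := FreeAlgebra.ι ℂ (Sum.inl i)

/-- The generator `p^i`. -/
def kp (i : Fin n) : KFree n d' := FreeAlgebra.ι ℂ (Sum.inr (Sum.inl i))

/-- The generator `Q_j`. -/
def kQ (j : Fin d') : KFree n d' := FreeAlgebra.ι ℂ (Sum.inr (Sum.inr (Sum.inl j)))

/-- The generator `P^j`. -/
def kP (j : Fin d') : KFree n d' := FreeAlgebra.ι ℂ (Sum.inr (Sum.inr (Sum.inr j)))

/-- Commutator `[a,b] = ab - ba`. -/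
def kBr (a b : KFree n d') : KFree n d' := a * b - b * a

/-- The element `ω = Σ_i [q_i, p^i] + Σ_j [Q_j, P^j]`. -/
def kOmega (n d' : ℕ) : KFree n d' :=
  (∑ i, kBr (kq i) (kp i)) + ∑ j, kBr (kQ j) (kP j)

/-- The relation identifying `ω` with `0`. -/
def kRel (n d' : ℕ) : KFree n d' → KFree n d' → Prop :=
  fun a b => a = kOmega n d' ∧ b = 0

/-- The algebra `K = F'/(ω)`, quotient by the two-sided ideal generated by `ω`. -/
abbrev KQuot (n d' : ℕ) := RingQuot (kRel n d')

/-- The quotient map `F' → K`. -/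
def kPi (n d' : ℕ) : KFree n d' →ₐ[ℂ] KQuot n d' := RingQuot.mkAlgHom ℂ (kRel n d')

end

section Aux

variable {n d' : ℕ}

lemma kBr_self (a : KFree n d') : kBr a a = 0 := sub_self _

lemma kBr_key (a b : KFree n d') :
    kBr a (kBr b (kBr b a)) + kBr b (kBr a (kBr a b)) = 0 := by
  simp only [kBr]; noncomm_ring

lemma kBr_neg_right (a x : KFree n d') : kBr a (-x) = -kBr a x := by
  simp only [kBr, mul_neg, neg_mul]; abel

lemma kBr_sub_right (a x y : KFree n d') : kBr a (x - y) = kBr a x - kBr a y := by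
  simp only [kBr, mul_sub, sub_mul]; abel

lemma kBr_sum_right {ι : Type*} (s : Finset ι) (a : KFree n d') (f : ι → KFree n d') :
    kBr a (∑ i ∈ s, f i) = ∑ i ∈ s, kBr a (f i) := by
  simp only [kBr, Finset.mul_sum, Finset.sum_mul, Finset.sum_sub_distrib]

end Aux

/-- the Hamiltonian derivation `H` satisfies `H(ω) = 0`; consequently it maps
the two-sided ideal generated by `ω` (the kernel of the quotient map) into itself and
induces a derivation of the quotient algebra `K = F'/(ω)`. -/
theorem statement9
    (n d' : ℕ)
    (u : Fin d' → KFree n d')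
    (hu_mem : ∀ j, u j ∈ Algebra.adjoin ℂ
      (Set.range fun j' : Fin d' => (kQ j' : KFree n d')))
    (hu_sum : ∑ j, kBr (kQ j) (u j) = (0 : KFree n d'))
    (H : KFree n d' →ₗ[ℂ] KFree n d')
    (hleib : ∀ x y : KFree n d', H (x * y) = H x * y + x * H y)
    (hq : ∀ i : Fin n, H (kq i) = kp i)
    (hQ : ∀ j : Fin d', H (kQ j) = kP j)
    (hp : ∀ m : Fin n, H (kp m) =
      -(∑ i, kBr (kq i) (kBr (kq i) (kq m))) - ∑ j, kBr (kQ j) (kBr (kQ j) (kq m)))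
    (hP : ∀ j : Fin d', H (kP j) =
      -(∑ i, kBr (kq i) (kBr (kq i) (kQ j))) - u j) :
    H (kOmega n d') = 0 ∧
    (∀ z : KFree n d', kPi n d' z = 0 → kPi n d' (H z) = 0) ∧
    (∃ δ : KQuot n d' →ₗ[ℂ] KQuot n d',
      (∀ x y : KQuot n d', δ (x * y) = δ x * y + x * δ y) ∧
      (∀ z : KFree n d', δ (kPi n d' z) = kPi n d' (H z))) := by
  have hbr : ∀ a b : KFree n d', H (kBr a b) = kBr (H a) b + kBr a (H b) := by
    intro a b
    simp only [kBr, map_sub, hleib]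
    abel
  -- Part 1 : H ω = 0
  have hS1 : ∑ i, ∑ m, kBr (kq i) (kBr (kq m) (kBr (kq m) (kq i)))
      = (0 : KFree n d') := by
    set S := ∑ i, ∑ m, kBr (kq i) (kBr (kq m) (kBr (kq m) (kq i))) with hS
    have hdup : S + S = 0 := by
      nth_rewrite 2 [hS]
      rw [Finset.sum_comm]
      rw [← Finset.sum_add_distrib]
      simp only [← Finset.sum_add_distrib]
      simp [kBr_key]
    have h2 : (2 : ℂ) • S = 0 := by rw [two_smul]; exact hdup
    rcases smul_eq_zero.mp h2 with h | h
    · exact absurd h two_ne_zero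
    · exact h
  have hS23 : (∑ i, ∑ j, kBr (kq i) (kBr (kQ j) (kBr (kQ j) (kq i))))
      + ∑ j, ∑ i, kBr (kQ j) (kBr (kq i) (kBr (kq i) (kQ j))) = (0 : KFree n d') := by
    rw [Finset.sum_comm (f := fun j i => kBr (kQ j) (kBr (kq i) (kBr (kq i) (kQ j))))]
    rw [← Finset.sum_add_distrib]
    simp only [← Finset.sum_add_distrib]
    simp [kBr_key]
  have h1 : H (kOmega n d') = 0 := by
    rw [kOmega, map_add, map_sum, map_sum]
    simp only [hbr, hq, hQ, kBr_self, zero_add, hp, hP]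
    simp only [kBr_sub_right, kBr_neg_right, kBr_sum_right]
    rw [Finset.sum_sub_distrib, Finset.sum_sub_distrib, Finset.sum_neg_distrib,
      Finset.sum_neg_distrib, hS1, hu_sum, neg_zero, zero_sub, sub_zero]
    have := hS23
    linear_combination (norm := abel) -this
  refine ⟨h1, ?_⟩
  -- Construct the induced derivation.
  have hH1 : H 1 = 0 := by
    have h := hleib 1 1
    simp only [one_mul, mul_one] at h
    exact (left_eq_add.mp h)
  set π := kPi n d' with hπ
  have hπω : π (kOmega n d') = 0 := by
    have h0 : kRel n d' (kOmega n d') 0 := ⟨rfl, rfl⟩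
    have := RingQuot.mkAlgHom_rel ℂ h0
    simpa [hπ, kPi] using this
  let Φ : KFree n d' →ₐ[ℂ] TrivSqZeroExt (KQuot n d') (KQuot n d') :=
    { toFun := fun x => ⟨π x, π (H x)⟩
      map_one' := by
        refine TrivSqZeroExt.ext ?_ ?_
        · simp
        · simp [hH1]
      map_mul' := fun x y => by
        refine TrivSqZeroExt.ext ?_ ?_
        · show π (x * y) = π x * π y
          exact map_mul π x y
        · show π (H (x * y)) = π x • π (H y) + MulOpposite.op (π y) • π (H x)
          simp only [hleib, map_add, map_mul]
          show π (H x) * π y + π x * π (H y)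
             = π x • π (H y) + MulOpposite.op (π y) • π (H x)
          rw [smul_eq_mul, op_smul_eq_mul]
          exact add_comm _ _
      map_zero' := by
        refine TrivSqZeroExt.ext ?_ ?_ <;> simp
      map_add' := fun x y => by
        refine TrivSqZeroExt.ext ?_ ?_ <;> simp [TrivSqZeroExt.fst_add, TrivSqZeroExt.snd_add] <;> rfl
      commutes' := fun c => by
        refine TrivSqZeroExt.ext ?_ ?_
        · exact π.commutes c
        · show π (H (algebraMap ℂ (KFree n d') c)) = (algebraMap ℂ _ c : TrivSqZeroExt _ _).snd
          rw [Algebra.algebraMap_eq_smul_one, map_smul, hH1, smul_zero, map_zero]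
          rfl }
  have hΦrel : ∀ ⦃x y : KFree n d'⦄, kRel n d' x y → Φ x = Φ y := by
    rintro x y ⟨rfl, rfl⟩
    refine TrivSqZeroExt.ext ?_ ?_
    · show π (kOmega n d') = π 0
      simp [hπω]
    · show π (H (kOmega n d')) = π (H 0)
      simp [h1]
  let Ψ : KQuot n d' →ₐ[ℂ] TrivSqZeroExt (KQuot n d') (KQuot n d') :=
    RingQuot.liftAlgHom ℂ ⟨Φ, hΦrel⟩
  have hΨπ : ∀ z : KFree n d', Ψ (π z) = Φ z := fun z =>
    RingQuot.liftAlgHom_mkAlgHom_apply ℂ Φ hΦrel z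
  have hfst : ∀ x : KQuot n d', (Ψ x).fst = x := by
    intro x
    obtain ⟨z, rfl⟩ := RingQuot.mkAlgHom_surjective ℂ (kRel n d') x
    rw [show RingQuot.mkAlgHom ℂ (kRel n d') z = π z from rfl, hΨπ]
    rfl
  let δ : KQuot n d' →ₗ[ℂ] KQuot n d' :=
    { toFun := fun x => (Ψ x).snd
      map_add' := fun x y => by rw [map_add, TrivSqZeroExt.snd_add]
      map_smul' := fun c x => by rw [map_smul, TrivSqZeroExt.snd_smul]; rfl }
  have hδπ : ∀ z : KFree n d', δ (π z) = π (H z) := by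
    intro z
    show (Ψ (π z)).snd = π (H z)
    rw [hΨπ]
    rfl
  refine ⟨?_, ⟨δ, ?_, hδπ⟩⟩
  · intro z hz
    have := hδπ z
    rw [show kPi n d' z = π z from rfl, hz, map_zero] at this
    exact this.symm
  · intro x y
    show (Ψ (x * y)).snd = (Ψ x).snd * y + x * (Ψ y).snd
    rw [map_mul, TrivSqZeroExt.snd_mul, hfst, hfst, smul_eq_mul,
      op_smul_eq_mul]
    exact add_comm _ _
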